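/- Let γ ≥ 1 and let P⁺, P⁻ be distinct positive reals, and define f : (0,∞) → ℝ by f(P) = P^γ + (P⁻P⁺/P)·(((P⁺)^γ − (P⁻)^γ)/(P⁺ − P⁻)) − ((P⁺)^{γ+1} − (P⁻)^{γ+1})/(P⁺ − P⁻). Then f(P⁺) = f(P⁻) = 0 and f''(P) > 0 for all P > 0. Consequently, if P⁺ < P⁻, then f'(P⁺) < 0, f'(P⁻) > 0, f(P) < 0 for P⁺ < P < P⁻, and f(P) > 0 for 0 < P < P⁺ and for P > P⁻. -/
import Mathlib

open Set

/-- properties of the profile nonlinearity `f` of the viscous QHD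
traveling-wave equation: `f(P⁺) = f(P⁻) = 0`, strict convexity (`f'' > 0` on `(0,∞)`),
and the resulting sign properties when `P⁺ < P⁻`. -/
theorem stmt_0 (γ Pp Pm : ℝ) (hγ : 1 ≤ γ) (hPp : 0 < Pp) (hPm : 0 < Pm) (hne : Pp ≠ Pm)
    (f : ℝ → ℝ)
    (hf : ∀ P : ℝ, f P =
      P ^ γ + Pm * Pp / P * ((Pp ^ γ - Pm ^ γ) / (Pp - Pm))
        - (Pp ^ (γ + 1) - Pm ^ (γ + 1)) / (Pp - Pm)) :
    f Pp = 0 ∧ f Pm = 0 ∧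
    (∀ P : ℝ, 0 < P → 0 < deriv (deriv f) P) ∧
    (Pp < Pm →
      deriv f Pp < 0 ∧ 0 < deriv f Pm ∧
      (∀ P : ℝ, Pp < P → P < Pm → f P < 0) ∧
      (∀ P : ℝ, 0 < P → P < Pp → 0 < f P) ∧
      (∀ P : ℝ, Pm < P → 0 < f P)) := by
  have hsub : Pp - Pm ≠ 0 := sub_ne_zero.mpr hne
  have hγ0 : (0:ℝ) < γ := lt_of_lt_of_le one_pos hγ
  set C : ℝ := (Pp ^ γ - Pm ^ γ) / (Pp - Pm) with hCdef
  set B : ℝ := (Pp ^ (γ + 1) - Pm ^ (γ + 1)) / (Pp - Pm) with hBdef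
  set A : ℝ := Pm * Pp * C with hAdef
  have hC : 0 < C := by
    rcases hne.lt_or_gt with h | h
    · have := Real.rpow_lt_rpow hPp.le h hγ0
      exact div_pos_of_neg_of_neg (by linarith) (by linarith)
    · have := Real.rpow_lt_rpow hPm.le h hγ0
      exact div_pos (by linarith) (by linarith)
  have hA : 0 < A := mul_pos (mul_pos hPm hPp) hC
  have hPp1 : Pp ^ (γ + 1) = Pp ^ γ * Pp := by rw [Real.rpow_add hPp, Real.rpow_one]
  have hPm1 : Pm ^ (γ + 1) = Pm ^ γ * Pm := by rw [Real.rpow_add hPm, Real.rpow_one]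
  -- zeros
  have hfPp : f Pp = 0 := by
    rw [hf, hCdef, hBdef, hPp1, hPm1]
    field_simp
    ring
  have hfPm : f Pm = 0 := by
    rw [hf, hCdef, hBdef, hPp1, hPm1]
    field_simp
    ring
  -- rewrite f with rpow
  have hneg1 : ∀ x : ℝ, x ^ (-1:ℝ) = x⁻¹ := by
    intro x
    rw [show (-1:ℝ) = ((-1:ℤ):ℝ) by norm_num, Real.rpow_intCast, zpow_neg_one]
  have hfeq : f = fun x : ℝ => x ^ γ + A * x ^ (-1:ℝ) - B := by
    funext x
    rw [hf x, hAdef, hneg1 x]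
    ring
  have hder : ∀ x : ℝ, x ≠ 0 →
      HasDerivAt f (γ * x ^ (γ-1) - A * x ^ (-2:ℝ)) x := by
    intro x hx
    rw [hfeq]
    have h1 : HasDerivAt (fun x:ℝ => x ^ γ) (γ * x ^ (γ-1)) x :=
      Real.hasDerivAt_rpow_const (Or.inr hγ)
    have h2 : HasDerivAt (fun x:ℝ => x ^ (-1:ℝ)) ((-1) * x ^ ((-1:ℝ)-1)) x :=
      Real.hasDerivAt_rpow_const (Or.inl hx)
    have h3 := (h1.add (h2.const_mul A)).sub_const B
    have key : γ * x ^ (γ-1) - A * x ^ (-2:ℝ)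
        = γ * x ^ (γ-1) + A * ((-1) * x ^ ((-1:ℝ)-1)) := by
      rw [show ((-1:ℝ)-1) = (-2:ℝ) by norm_num]; ring
    rw [key]; exact h3
  set D : ℝ → ℝ := fun x => γ * x ^ (γ-1) - A * x ^ (-2:ℝ) with hDdef
  have hderiv_eq : ∀ x : ℝ, x ≠ 0 → deriv f x = D x := fun x hx => (hder x hx).deriv
  have hDder : ∀ x : ℝ, 0 < x →
      HasDerivAt D (γ * (γ-1) * x ^ (γ-2) + 2 * A * x ^ (-3:ℝ)) x := by
    intro x hx
    have h1 : HasDerivAt (fun x:ℝ => x ^ (γ-1)) ((γ-1) * x ^ (γ-1-1)) x :=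
      Real.hasDerivAt_rpow_const (Or.inl hx.ne')
    have h2 : HasDerivAt (fun x:ℝ => x ^ (-2:ℝ)) ((-2) * x ^ ((-2:ℝ)-1)) x :=
      Real.hasDerivAt_rpow_const (Or.inl hx.ne')
    have h3 := (h1.const_mul γ).sub (h2.const_mul A)
    have key : γ * (γ-1) * x ^ (γ-2) + 2 * A * x ^ (-3:ℝ)
        = γ * ((γ-1) * x ^ (γ-1-1)) - A * ((-2) * x ^ ((-2:ℝ)-1)) := by
      rw [show ((-2:ℝ)-1) = (-3:ℝ) by norm_num, show γ-1-1 = γ-2 by ring]; ring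
    rw [hDdef, key]; exact h3
  have hDF : ∀ P : ℝ, 0 < P → deriv f =ᶠ[nhds P] D := by
    intro P hP
    filter_upwards [IsOpen.mem_nhds isOpen_compl_singleton
      (by simpa using hP.ne' : P ∈ ({0}ᶜ : Set ℝ))] with x hx
    exact hderiv_eq x hx
  have h2pos : ∀ P : ℝ, 0 < P → 0 < deriv (deriv f) P := by
    intro P hP
    rw [(hDF P hP).deriv_eq, (hDder P hP).deriv]
    have t1 : 0 ≤ γ * (γ-1) * P ^ (γ-2) :=
      mul_nonneg (mul_nonneg hγ0.le (by linarith)) (Real.rpow_pos_of_pos hP _).le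
    have t2 : 0 < 2 * A * P ^ (-3:ℝ) :=
      mul_pos (mul_pos two_pos hA) (Real.rpow_pos_of_pos hP _)
    linarith
  have hcontf : ContinuousOn f (Ioi 0) := fun x hx =>
    ((hder x (ne_of_gt hx)).continuousAt).continuousWithinAt
  have hcontd : ContinuousOn (deriv f) (Ioi 0) := fun x hx =>
    (ContinuousAt.congr (hDder x hx).continuousAt (hDF x hx).symm).continuousWithinAt
  refine ⟨hfPp, hfPm, h2pos, fun hlt => ?_⟩
  have hmono : StrictMonoOn (deriv f) (Ioi 0) := by
    refine strictMonoOn_of_deriv_pos (convex_Ioi 0) hcontd ?_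
    rw [interior_Ioi]; exact fun x hx => h2pos x hx
  have hIcc : Icc Pp Pm ⊆ Ioi 0 := fun x hx => lt_of_lt_of_le hPp hx.1
  obtain ⟨c, hc, hc0⟩ := exists_deriv_eq_zero hlt (hcontf.mono hIcc) (hfPp.trans hfPm.symm)
  have hcpos : (0:ℝ) < c := lt_trans hPp hc.1
  have hdPp : deriv f Pp < 0 := by
    have := hmono (mem_Ioi.mpr hPp) (mem_Ioi.mpr hcpos) hc.1
    linarith [this, hc0.le]
  have hdPm : 0 < deriv f Pm := by
    have := hmono (mem_Ioi.mpr hcpos) (mem_Ioi.mpr hPm) hc.2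
    linarith [this]
  refine ⟨hdPp, hdPm, ?_, ?_, ?_⟩
  · -- f < 0 between
    intro P h1 h2
    rcases le_or_gt P c with hPc | hPc
    · have hanti : StrictAntiOn f (Icc Pp c) := by
        refine strictAntiOn_of_deriv_neg (convex_Icc _ _)
          (hcontf.mono (fun x hx => lt_of_lt_of_le hPp hx.1)) ?_
        rw [interior_Icc]
        intro x hx
        have := hmono (mem_Ioi.mpr (lt_trans hPp hx.1)) (mem_Ioi.mpr hcpos) hx.2
        linarith [hc0]
      have := hanti (left_mem_Icc.mpr hc.1.le) ⟨h1.le, hPc⟩ h1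
      linarith [hfPp, this]
    · have hmo : StrictMonoOn f (Icc c Pm) := by
        refine strictMonoOn_of_deriv_pos (convex_Icc _ _)
          (hcontf.mono (fun x hx => lt_of_lt_of_le hcpos hx.1)) ?_
        rw [interior_Icc]
        intro x hx
        have := hmono (mem_Ioi.mpr hcpos) (mem_Ioi.mpr (lt_trans hcpos hx.1)) hx.1
        linarith [hc0]
      have := hmo ⟨hPc.le, h2.le⟩ (right_mem_Icc.mpr hc.2.le) h2
      linarith [hfPm, this]
  · -- f > 0 below Pp
    intro P hP0 hP
    have hanti : StrictAntiOn f (Icc P Pp) := by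
      refine strictAntiOn_of_deriv_neg (convex_Icc _ _)
        (hcontf.mono (fun x hx => lt_of_lt_of_le hP0 hx.1)) ?_
      rw [interior_Icc]
      intro x hx
      have := hmono (mem_Ioi.mpr (lt_trans hP0 hx.1)) (mem_Ioi.mpr hPp) hx.2
      linarith [hdPp]
    have := hanti (left_mem_Icc.mpr hP.le) (right_mem_Icc.mpr hP.le) hP
    linarith [hfPp, this]
  · -- f > 0 above Pm
    intro P hP
    have hmo : StrictMonoOn f (Icc Pm P) := by
      refine strictMonoOn_of_deriv_pos (convex_Icc _ _)
        (hcontf.mono (fun x hx => lt_of_lt_of_le hPm hx.1)) ?_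
      rw [interior_Icc]
      intro x hx
      have := hmono (mem_Ioi.mpr hPm) (mem_Ioi.mpr (lt_trans hPm hx.1)) hx.1
      linarith [hdPm]
    have := hmo (left_mem_Icc.mpr hP.le) (right_mem_Icc.mpr hP.le) hP
    linarith [hfPm, this]
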